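/- Theorem 3 (the representation kills the alternating window sums): suppose n ≥ N + 2 and fix k with 1 ≤ k ≤ n − N − 1. Then ∑_{w} sgn(w)·P_w = 0, where the sum ranges over all permutations w of {1,…,n} that fix every point outside the window {k, k+1, …, k+N+1}, P_w = M_{i_1}⋯M_{i_ℓ} for any reduced word (i_1,…,i_ℓ) of w, and sgn(w) = ±1 is the sign of w viewed in F. -/

import Mathlib

open Matrix

/-- The tuple `u` with the entries in positions `i` and `i+1` interchanged
(0-indexed; returns `u` unchanged if `i+1` is out of range). -/
def swapTup (n N : ℕ) (i : ℕ) (u : Fin n → Fin (N + 1)) : Fin n → Fin (N + 1) :=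
  if h : i + 1 < n then u ∘ Equiv.swap ⟨i, Nat.lt_of_succ_lt h⟩ ⟨i + 1, h⟩ else u

/-- Jones's bowling-ball matrix `M_i` (0-indexed: `i` ranges over `0,…,n-2`,
corresponding to the lanes `i+1` and `i+2` in 1-indexed notation; it is the
identity matrix out of range).  Rows and columns are indexed by the tuples
`u : Fin n → Fin (N+1)` recording the number of balls in each lane:
`M_i e_u = e_{s_i u}` if `u i ≤ u (i+1)`, and
`M_i e_u = q • e_{s_i u} + (1-q) • e_u` if `u i > u (i+1)`. -/
def bowlM (F : Type*) [Field F] (q : F) (n N : ℕ) (i : ℕ) :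
    Matrix (Fin n → Fin (N + 1)) (Fin n → Fin (N + 1)) F :=
  if h : i + 1 < n then
    Matrix.of fun v u =>
      if u ⟨i, Nat.lt_of_succ_lt h⟩ ≤ u ⟨i + 1, h⟩ then
        (if v = swapTup n N i u then 1 else 0)
      else
        q * (if v = swapTup n N i u then 1 else 0) + (1 - q) * (if v = u then 1 else 0)
  else 1
/-- The adjacent transposition `s_i = (i, i+1)` of `Fin n`
(0-indexed; the identity permutation out of range). -/
def adjSwap (n : ℕ) (i : ℕ) : Equiv.Perm (Fin n) :=
  if h : i + 1 < n then Equiv.swap ⟨i, Nat.lt_of_succ_lt h⟩ ⟨i + 1, h⟩ else 1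

/-- The number of inversions of a permutation `w` of `Fin n`:
the number of pairs `i < j` with `w j < w i`. -/
def inversions (n : ℕ) (w : Equiv.Perm (Fin n)) : ℕ :=
  (Finset.univ.filter fun p : Fin n × Fin n => p.1 < p.2 ∧ w p.2 < w p.1).card

/-- A list `l` of indices (0-indexed, each in `{0, …, n-2}`) is a reduced word
for the permutation `w` if `w` is the composite of the corresponding adjacent
transpositions and the length of `l` equals the number of inversions of `w`. -/
def IsReducedWord (n : ℕ) (w : Equiv.Perm (Fin n)) (l : List ℕ) : Prop :=
  (∀ i ∈ l, i + 1 < n) ∧ (l.map (adjSwap n)).prod = w ∧ l.length = inversions n w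

/-- The product `M_{i_1} ⋯ M_{i_ℓ}` of bowling-ball matrices along a word. -/
def prodBowlM (F : Type*) [Field F] (q : F) (n N : ℕ) (l : List ℕ) :
    Matrix (Fin n → Fin (N + 1)) (Fin n → Fin (N + 1)) F :=
  (l.map (bowlM F q n N)).prod

namespace AltWin

/-- Inversions of an arbitrary tuple. -/
def tupInv {n : ℕ} {α : Type*} [LinearOrder α] (f : Fin n → α) : ℕ :=
  (Finset.univ.filter fun p : Fin n × Fin n => p.1 < p.2 ∧ f p.2 < f p.1).card

lemma swap_pair_lt {n i : ℕ} (h : i + 1 < n) {x y : Fin n}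
    (hxy : x < y) (hne : ¬(x = ⟨i, Nat.lt_of_succ_lt h⟩ ∧ y = ⟨i+1, h⟩)) :
    Equiv.swap ⟨i, Nat.lt_of_succ_lt h⟩ ⟨i+1, h⟩ x < Equiv.swap ⟨i, Nat.lt_of_succ_lt h⟩ ⟨i+1, h⟩ y := by
  simp only [Equiv.swap_apply_def]
  split_ifs <;>
    (try simp only [Fin.lt_def, Fin.ext_iff, Fin.val_mk, not_and] at *) <;> omega

lemma tupInv_comp_swap {n : ℕ} {α : Type*} [LinearOrder α] {f : Fin n → α} {i : ℕ}
    (h : i + 1 < n) (hf : f ⟨i, Nat.lt_of_succ_lt h⟩ < f ⟨i+1, h⟩) :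
    tupInv (f ∘ Equiv.swap ⟨i, Nat.lt_of_succ_lt h⟩ ⟨i+1, h⟩) = tupInv f + 1 := by
  classical
  set a : Fin n := ⟨i, Nat.lt_of_succ_lt h⟩ with ha
  set b : Fin n := ⟨i+1, h⟩ with hb
  set s := Equiv.swap a b with hs
  have hab : a < b := by simp [ha, hb, Fin.lt_def]
  set A := Finset.univ.filter fun p : Fin n × Fin n => p.1 < p.2 ∧ f (s p.2) < f (s p.1) with hA
  set B := Finset.univ.filter fun p : Fin n × Fin n => p.1 < p.2 ∧ f p.2 < f p.1 with hB
  have hTA : tupInv (f ∘ s) = A.card := rfl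
  have hTB : tupInv f = B.card := rfl
  have hmemA : ((a, b) : Fin n × Fin n) ∈ A := by
    rw [hA, Finset.mem_filter]
    refine ⟨Finset.mem_univ _, hab, ?_⟩
    show f (s b) < f (s a)
    rw [hs, Equiv.swap_apply_left, Equiv.swap_apply_right]
    exact hf
  have hmemB : ((a, b) : Fin n × Fin n) ∉ B := by
    rw [hB, Finset.mem_filter]
    rintro ⟨-, -, hlt⟩
    exact absurd hlt (lt_asymm hf)
  have himg : ∀ p : Fin n × Fin n, p.1 < p.2 → p ≠ (a, b) →
      s p.1 < s p.2 ∧ (s p.1, s p.2) ≠ (a, b) := by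
    intro p hp hne
    have hne' : ¬(p.1 = a ∧ p.2 = b) := by
      intro hc; exact hne (Prod.ext hc.1 hc.2)
    constructor
    · exact swap_pair_lt h hp hne'
    · intro hc
      have h1 : s p.1 = a := congrArg Prod.fst hc
      have h2 : s p.2 = b := congrArg Prod.snd hc
      have e1 : p.1 = b := by
        have := congrArg s h1
        simpa [hs, Equiv.swap_apply_self, Equiv.swap_apply_left] using this
      have e2 : p.2 = a := by
        have := congrArg s h2
        simpa [hs, Equiv.swap_apply_self, Equiv.swap_apply_right] using this
      rw [e1, e2] at hp
      exact absurd hp (lt_asymm hab)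
  have key : (A.erase (a, b)).card = (B.erase (a, b)).card := by
    apply Finset.card_bij' (fun p _ => (s p.1, s p.2)) (fun p _ => (s p.1, s p.2))
    · intro p hp
      rw [Finset.mem_erase, hA, Finset.mem_filter] at hp
      obtain ⟨hne, -, hlt, hinv⟩ := hp
      obtain ⟨hlt', hne'⟩ := himg p hlt hne
      rw [Finset.mem_erase, hB, Finset.mem_filter]
      exact ⟨hne', Finset.mem_univ _, hlt', hinv⟩
    · intro p hp
      rw [Finset.mem_erase, hB, Finset.mem_filter] at hp
      obtain ⟨hne, -, hlt, hinv⟩ := hp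
      obtain ⟨hlt', hne'⟩ := himg p hlt hne
      rw [Finset.mem_erase, hA, Finset.mem_filter]
      refine ⟨hne', Finset.mem_univ _, hlt', ?_⟩
      simpa [hs, Equiv.swap_apply_self] using hinv
    · intro p hp; simp [hs, Equiv.swap_apply_self]
    · intro p hp; simp [hs, Equiv.swap_apply_self]
  have h1 : A.card = (A.erase (a, b)).card + 1 := (Finset.card_erase_add_one hmemA).symm
  have h2 : (B.erase (a, b)).card = B.card := by rw [Finset.erase_eq_of_notMem hmemB]
  rw [hTA, hTB, h1, key, h2]

lemma adjSwap_of_lt {n i : ℕ} (h : i + 1 < n) :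
    adjSwap n i = Equiv.swap ⟨i, Nat.lt_of_succ_lt h⟩ ⟨i+1, h⟩ := dif_pos h

lemma adjSwap_mul_self (n i : ℕ) : adjSwap n i * adjSwap n i = 1 := by
  unfold adjSwap; split <;> simp [Equiv.swap_mul_self]

lemma adjSwap_fst {n i : ℕ} (h : i + 1 < n) :
    adjSwap n i ⟨i, Nat.lt_of_succ_lt h⟩ = ⟨i+1, h⟩ := by
  rw [adjSwap_of_lt h]; exact Equiv.swap_apply_left _ _

lemma adjSwap_snd {n i : ℕ} (h : i + 1 < n) :
    adjSwap n i ⟨i+1, h⟩ = ⟨i, Nat.lt_of_succ_lt h⟩ := by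
  rw [adjSwap_of_lt h]; exact Equiv.swap_apply_right _ _

lemma adjSwap_other {n i : ℕ} (h : i + 1 < n) {j : Fin n}
    (h1 : (j : ℕ) ≠ i) (h2 : (j : ℕ) ≠ i + 1) : adjSwap n i j = j := by
  rw [adjSwap_of_lt h]
  apply Equiv.swap_apply_of_ne_of_ne <;> simp [Fin.ext_iff, h1, h2]

lemma sign_adjSwap {n i : ℕ} (h : i + 1 < n) :
    Equiv.Perm.sign (adjSwap n i) = -1 := by
  rw [adjSwap_of_lt h]
  exact Equiv.Perm.sign_swap (by simp [Fin.ext_iff])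

lemma inversions_eq_tupInv {n : ℕ} (w : Equiv.Perm (Fin n)) :
    inversions n w = tupInv (⇑w) := rfl

lemma inversions_mul_adjSwap {n : ℕ} {w : Equiv.Perm (Fin n)} {i : ℕ} (h : i + 1 < n)
    (hw : w ⟨i, Nat.lt_of_succ_lt h⟩ < w ⟨i+1, h⟩) :
    inversions n (w * adjSwap n i) = inversions n w + 1 := by
  have hc : ⇑(w * adjSwap n i)
      = ⇑w ∘ ⇑(Equiv.swap (⟨i, Nat.lt_of_succ_lt h⟩ : Fin n) ⟨i+1, h⟩) := by
    rw [adjSwap_of_lt h]; rfl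
  rw [inversions_eq_tupInv, inversions_eq_tupInv, hc]
  exact tupInv_comp_swap h hw

lemma eq_one_of_no_descent {n : ℕ} {w : Equiv.Perm (Fin n)}
    (hc : ∀ i (h : i + 1 < n), ¬ w ⟨i+1, h⟩ < w ⟨i, Nat.lt_of_succ_lt h⟩) : w = 1 := by
  have step : ∀ i (h : i + 1 < n), w ⟨i, Nat.lt_of_succ_lt h⟩ < w ⟨i+1, h⟩ := by
    intro i h
    rcases lt_or_eq_of_le (le_of_not_gt (hc i h)) with h' | h'
    · exact h'
    · exact absurd (w.injective h') (by simp [Fin.ext_iff])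
  have chain : ∀ d (x : Fin n) (hd : (x : ℕ) + d + 1 < n), w x < w ⟨x + d + 1, hd⟩ := by
    intro d
    induction d with
    | zero =>
      intro x hd
      have := step x (by omega : (x:ℕ) + 1 < n)
      simpa [Fin.ext_iff] using this
    | succ d ih =>
      intro x hd
      have h1 : (x : ℕ) + d + 1 < n := by omega
      refine lt_trans (ih x h1) ?_
      have := step ((x : ℕ) + d + 1) (by omega)
      exact lt_of_lt_of_eq this (congrArg w (Fin.ext (by show (x:ℕ) + d + 1 + 1 = (x:ℕ) + (d + 1) + 1; omega)))
  have mono : StrictMono ⇑w := by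
    intro x y hxy
    have hxy' : (x : ℕ) < (y : ℕ) := hxy
    have hy : y = ⟨(x : ℕ) + ((y : ℕ) - (x : ℕ) - 1) + 1, by omega⟩ := by
      simp [Fin.ext_iff]; omega
    rw [hy]
    exact chain _ x _
  have : ⇑w = ⇑(1 : Equiv.Perm (Fin n)) := by
    apply (StrictMono.range_inj mono (by simpa using strictMono_id)).1
    rw [w.surjective.range_eq]
    simp [Set.range_id]
  exact Equiv.ext fun x => congrFun this x

lemma inversions_one (n : ℕ) : inversions n (1 : Equiv.Perm (Fin n)) = 0 := by
  rw [inversions, Finset.card_eq_zero, Finset.filter_eq_empty_iff]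
  rintro p - ⟨h1, h2⟩
  simp at h2
  exact absurd h2 (not_lt_of_gt h1)

lemma exists_reducedWord {n : ℕ} (w : Equiv.Perm (Fin n)) : ∃ l, IsReducedWord n w l := by
  suffices H : ∀ (m : ℕ) (w : Equiv.Perm (Fin n)), inversions n w = m → ∃ l, IsReducedWord n w l from
    H _ w rfl
  intro m
  induction m using Nat.strong_induction_on with
  | _ m ih =>
    intro w hm
    by_cases hd : ∃ i, ∃ h : i + 1 < n, w ⟨i+1, h⟩ < w ⟨i, Nat.lt_of_succ_lt h⟩
    · obtain ⟨i, h, hdesc⟩ := hd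
      set s := adjSwap n i with hs
      have hw' : (w * s) ⟨i, Nat.lt_of_succ_lt h⟩ < (w * s) ⟨i+1, h⟩ := by
        rw [Equiv.Perm.mul_apply, Equiv.Perm.mul_apply, hs, adjSwap_fst h, adjSwap_snd h]
        exact hdesc
      have hws : w * s * s = w := by rw [mul_assoc, hs, adjSwap_mul_self, mul_one]
      have hinv : inversions n w = inversions n (w * s) + 1 := by
        have := inversions_mul_adjSwap h hw'
        rwa [← hs, hws] at this
      have hlt : inversions n (w * s) < m := by omega
      obtain ⟨l, hl1, hl2, hl3⟩ := ih _ hlt (w * s) rfl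
      refine ⟨l ++ [i], ?_, ?_, ?_⟩
      · intro j hj
        rcases List.mem_append.1 hj with hj | hj
        · exact hl1 j hj
        · simp at hj; omega
      · rw [List.map_append, List.prod_append]
        simp [hl2, ← hs, hws]
      · rw [List.length_append, hl3]
        simp [← hm, hinv]
    · push_neg at hd
      have hw1 : w = 1 := eq_one_of_no_descent (fun i h => not_lt_of_ge (hd i h))
      exact ⟨[], by simp, by simp [hw1], by simp [hw1, inversions_one]⟩

variable {F : Type*} [Field F] {q : F} {n N : ℕ}

lemma swapTup_fst {i : ℕ} (h : i + 1 < n) (u : Fin n → Fin (N+1)) :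
    swapTup n N i u ⟨i, Nat.lt_of_succ_lt h⟩ = u ⟨i+1, h⟩ := by
  rw [swapTup, dif_pos h]
  simp [Equiv.swap_apply_left]

lemma swapTup_snd {i : ℕ} (h : i + 1 < n) (u : Fin n → Fin (N+1)) :
    swapTup n N i u ⟨i+1, h⟩ = u ⟨i, Nat.lt_of_succ_lt h⟩ := by
  rw [swapTup, dif_pos h]
  simp [Equiv.swap_apply_right]

lemma swapTup_swapTup {i : ℕ} (h : i + 1 < n) (u : Fin n → Fin (N+1)) :
    swapTup n N i (swapTup n N i u) = u := by
  rw [swapTup, dif_pos h, swapTup, dif_pos h]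
  funext x
  simp [Equiv.swap_apply_self]

lemma swapTup_self {i : ℕ} (h : i + 1 < n) {u : Fin n → Fin (N+1)}
    (hu : u ⟨i, Nat.lt_of_succ_lt h⟩ = u ⟨i+1, h⟩) : swapTup n N i u = u := by
  rw [swapTup, dif_pos h]
  funext x
  rcases eq_or_ne x ⟨i, Nat.lt_of_succ_lt h⟩ with hx | hx
  · simp [hx, Equiv.swap_apply_left, hu]
  · rcases eq_or_ne x ⟨i+1, h⟩ with hx2 | hx2
    · simp [hx2, Equiv.swap_apply_right, hu]
    · simp [Equiv.swap_apply_of_ne_of_ne hx hx2]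

lemma bowlM_col_le {i : ℕ} (h : i + 1 < n) {u : Fin n → Fin (N+1)}
    (hu : u ⟨i, Nat.lt_of_succ_lt h⟩ ≤ u ⟨i+1, h⟩) :
    bowlM F q n N i *ᵥ Pi.single u 1 = Pi.single (swapTup n N i u) 1 := by
  funext v
  rw [Matrix.mulVec_single_one]
  simp only [mul_one, bowlM, dif_pos h, Matrix.of_apply, if_pos hu, Pi.single_apply, Matrix.col_apply]

lemma bowlM_col_gt {i : ℕ} (h : i + 1 < n) {u : Fin n → Fin (N+1)}
    (hu : u ⟨i+1, h⟩ < u ⟨i, Nat.lt_of_succ_lt h⟩) :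
    bowlM F q n N i *ᵥ Pi.single u 1
      = q • (Pi.single (swapTup n N i u) 1 : (Fin n → Fin (N+1)) → F)
        + (1 - q) • (Pi.single u 1 : (Fin n → Fin (N+1)) → F) := by
  funext v
  rw [Matrix.mulVec_single_one]
  have : ¬ u ⟨i, Nat.lt_of_succ_lt h⟩ ≤ u ⟨i+1, h⟩ := not_le_of_gt hu
  simp only [mul_one, bowlM, dif_pos h, Matrix.of_apply, if_neg this, Pi.add_apply,
    Pi.smul_apply, smul_eq_mul, Pi.single_apply, Matrix.col_apply]

lemma matrix_ext_col {ι : Type*} [Fintype ι] [DecidableEq ι] {A B : Matrix ι ι F}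
    (h : ∀ u, A *ᵥ Pi.single u 1 = B *ᵥ Pi.single u 1) : A = B := by
  ext v u
  have := congrFun (h u) v
  simpa [Matrix.mulVec_single] using this

lemma bowlM_sq {i : ℕ} (h : i + 1 < n) :
    bowlM F q n N i * bowlM F q n N i
      = (1 - q) • bowlM F q n N i + q • (1 : Matrix (Fin n → Fin (N+1)) (Fin n → Fin (N+1)) F) := by
  apply matrix_ext_col
  intro u
  rw [← Matrix.mulVec_mulVec, Matrix.add_mulVec, Matrix.smul_mulVec,
    Matrix.smul_mulVec, Matrix.one_mulVec]
  rcases lt_trichotomy (u ⟨i, Nat.lt_of_succ_lt h⟩) (u ⟨i+1, h⟩) with hlt | heq | hgt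
  · rw [bowlM_col_le h hlt.le]
    have h2 : swapTup n N i u ⟨i+1, h⟩ < swapTup n N i u ⟨i, Nat.lt_of_succ_lt h⟩ := by
      rw [swapTup_fst h, swapTup_snd h]; exact hlt
    rw [bowlM_col_gt h h2, swapTup_swapTup h]
    abel
  · rw [bowlM_col_le h heq.le, swapTup_self h heq, bowlM_col_le h heq.le, swapTup_self h heq]
    rw [← add_smul]
    ring_nf
    rw [one_smul]
  · rw [bowlM_col_gt h hgt, Matrix.mulVec_add, Matrix.mulVec_smul, Matrix.mulVec_smul]
    have h2 : swapTup n N i u ⟨i, Nat.lt_of_succ_lt h⟩ ≤ swapTup n N i u ⟨i+1, h⟩ := by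
      rw [swapTup_fst h, swapTup_snd h]; exact hgt.le
    rw [bowlM_col_le h h2, swapTup_swapTup h, bowlM_col_gt h hgt]
    abel

end AltWin

/-- **Theorem 3: the representation kills the alternating window sums.**
Suppose `n ≥ N + 2` and fix a window start `k` (0-indexed, so
`k + N + 2 ≤ n` corresponds to `1 ≤ k ≤ n - N - 1` in 1-indexed notation).
Let `P w` be the product of bowling-ball matrices along any reduced word of
`w` (the hypothesis `hP` pins down `P` since every permutation has a
reduced word).  Then `∑_w sgn(w)·P_w = 0`, the sum ranging over all
permutations fixing every point outside the window `{k, …, k + N + 1}`. -/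
theorem alternating_window_sum_eq_zero (F : Type*) [Field F] (q : F) (n N : ℕ)
    (hn : 2 ≤ n) (hN : 1 ≤ N)
    (P : Equiv.Perm (Fin n) → Matrix (Fin n → Fin (N + 1)) (Fin n → Fin (N + 1)) F)
    (hP : ∀ w l, IsReducedWord n w l → P w = prodBowlM F q n N l)
    (k : ℕ) (hk : k + N + 2 ≤ n) :
    ∑ w ∈ Finset.univ.filter
        (fun w : Equiv.Perm (Fin n) =>
          ∀ j : Fin n, ((j : ℕ) < k ∨ k + N + 1 < (j : ℕ)) → w j = j),
      ((Equiv.Perm.sign w : ℤ) : F) • P w = 0 := by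
  classical
  set W := Finset.univ.filter
      (fun w : Equiv.Perm (Fin n) =>
        ∀ j : Fin n, ((j : ℕ) < k ∨ k + N + 1 < (j : ℕ)) → w j = j) with hW
  -- sign flip under right multiplication by an adjacent transposition
  have sgn_mul : ∀ (i : ℕ), i + 1 < n → ∀ (w : Equiv.Perm (Fin n)),
      ((Equiv.Perm.sign (w * adjSwap n i) : ℤ) : F) = -((Equiv.Perm.sign w : ℤ) : F) := by
    intro i h w
    rw [_root_.map_mul, AltWin.sign_adjSwap h, mul_neg_one]
    push_cast
    ring
  -- the window set is closed under right multiplication by window transpositions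
  have hclosed : ∀ (i : ℕ) (h : i + 1 < n), k ≤ i → i ≤ k + N →
      ∀ w ∈ W, w * adjSwap n i ∈ W := by
    intro i h h1 h2 w hw
    rw [hW, Finset.mem_filter] at hw ⊢
    refine ⟨Finset.mem_univ _, fun j hj => ?_⟩
    have hji : (j : ℕ) ≠ i := by rcases hj with hj | hj <;> omega
    have hji2 : (j : ℕ) ≠ i + 1 := by rcases hj with hj | hj <;> omega
    rw [Equiv.Perm.mul_apply, AltWin.adjSwap_other h hji hji2]
    exact hw.2 j hj
  have hne : ∀ (i : ℕ), i + 1 < n → ∀ (w : Equiv.Perm (Fin n)), w * adjSwap n i ≠ w := by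
    intro i h w hc
    have h1 : adjSwap n i = 1 := mul_left_cancel (a := w) (by rw [mul_one]; exact hc)
    have h2 := congrArg (fun s : Equiv.Perm (Fin n) => s ⟨i, Nat.lt_of_succ_lt h⟩) h1
    simp only [AltWin.adjSwap_fst h, Equiv.Perm.one_apply] at h2
    exact absurd h2 (by simp [Fin.ext_iff])
  have hg_inv : ∀ (i : ℕ) (w : Equiv.Perm (Fin n)), w * adjSwap n i * adjSwap n i = w := by
    intro i w; rw [mul_assoc, AltWin.adjSwap_mul_self, mul_one]
  -- the recursion for P along ascents
  have hPmul : ∀ (i : ℕ) (h : i + 1 < n) (w : Equiv.Perm (Fin n)),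
      w ⟨i, Nat.lt_of_succ_lt h⟩ < w ⟨i+1, h⟩ →
      P (w * adjSwap n i) = P w * bowlM F q n N i := by
    intro i h w hasc
    obtain ⟨l, hl1, hl2, hl3⟩ := AltWin.exists_reducedWord w
    have hl' : IsReducedWord n (w * adjSwap n i) (l ++ [i]) := by
      refine ⟨?_, ?_, ?_⟩
      · intro j hj
        rcases List.mem_append.1 hj with hj | hj
        · exact hl1 j hj
        · simp at hj; omega
      · rw [List.map_append, List.prod_append]
        simp [hl2]
      · rw [List.length_append, hl3, AltWin.inversions_mul_adjSwap h hasc]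
        simp
    rw [hP _ _ ⟨hl1, hl2, hl3⟩, hP _ _ hl']
    rw [prodBowlM, prodBowlM, List.map_append, List.prod_append]
    simp
  -- dichotomy: either w or w·sᵢ ascends at i
  have hdich : ∀ (i : ℕ) (h : i + 1 < n) (w : Equiv.Perm (Fin n)),
      w ⟨i, Nat.lt_of_succ_lt h⟩ < w ⟨i+1, h⟩ ∨
      (w * adjSwap n i) ⟨i, Nat.lt_of_succ_lt h⟩ < (w * adjSwap n i) ⟨i+1, h⟩ := by
    intro i h w
    have hne12 : (⟨i, Nat.lt_of_succ_lt h⟩ : Fin n) ≠ ⟨i+1, h⟩ := by simp [Fin.ext_iff]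
    rcases lt_or_gt_of_ne (fun hc => hne12 (w.injective hc)) with h' | h'
    · exact Or.inl h'
    · right
      rw [Equiv.Perm.mul_apply, Equiv.Perm.mul_apply, AltWin.adjSwap_fst h, AltWin.adjSwap_snd h]
      exact h'
  -- vector form of the alternating sum
  have hvec : ∀ x : (Fin n → Fin (N+1)) → F,
      (∑ w ∈ W, ((Equiv.Perm.sign w : ℤ) : F) • P w) *ᵥ x
        = ∑ w ∈ W, ((Equiv.Perm.sign w : ℤ) : F) • (P w *ᵥ x) := by
    intro x
    have hms := map_sum (Matrix.mulVec.addMonoidHomLeft x)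
      (fun w => ((Equiv.Perm.sign w : ℤ) : F) • P w) W
    funext v
    have h2 := congrFun hms v
    simp only [Matrix.mulVec.addMonoidHomLeft_apply, Finset.sum_apply, Pi.smul_apply] at h2 ⊢
    convert h2 using 2 <;>
      simp [Matrix.smul_mulVec, Matrix.mulVec.addMonoidHomLeft_apply]
  -- Lemma A: the alternating sum is a (-q)-eigenvector for right multiplication by Mᵢ
  have hA : ∀ (i : ℕ) (h : i + 1 < n), k ≤ i → i ≤ k + N →
      (∑ w ∈ W, ((Equiv.Perm.sign w : ℤ) : F) • P w) * bowlM F q n N i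
        = (-q) • ∑ w ∈ W, ((Equiv.Perm.sign w : ℤ) : F) • P w := by
    intro i h h1 h2
    rw [Finset.sum_mul, Finset.smul_sum, ← sub_eq_zero, ← Finset.sum_sub_distrib]
    apply Finset.sum_involution (fun w _ => w * adjSwap n i)
    · intro w hw
      have key : ∀ v : Equiv.Perm (Fin n), v ⟨i, Nat.lt_of_succ_lt h⟩ < v ⟨i+1, h⟩ →
          (((Equiv.Perm.sign v : ℤ) : F) • P v * bowlM F q n N i
            - (-q) • (((Equiv.Perm.sign v : ℤ) : F) • P v))
          + (((Equiv.Perm.sign (v * adjSwap n i) : ℤ) : F) • P (v * adjSwap n i) * bowlM F q n N i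
            - (-q) • (((Equiv.Perm.sign (v * adjSwap n i) : ℤ) : F) • P (v * adjSwap n i))) = 0 := by
        intro v hasc
        rw [hPmul i h v hasc, sgn_mul i h v, smul_mul_assoc, smul_mul_assoc, mul_assoc,
          AltWin.bowlM_sq h, Matrix.mul_add, Matrix.mul_smul, Matrix.mul_smul, mul_one]
        module
      rcases hdich i h w with hasc | hasc
      · exact key w hasc
      · have hk2 := key (w * adjSwap n i) hasc
        rw [hg_inv i w] at hk2
        simpa [add_comm] using hk2
    · intro w hw _; exact hne i h w
    · intro w hw; exact hclosed i h h1 h2 w hw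
    · intro w hw; exact hg_inv i w
  -- main induction: every column of the alternating sum vanishes
  have key : ∀ (m : ℕ) (u : Fin n → Fin (N+1)), AltWin.tupInv u = m →
      (∑ w ∈ W, ((Equiv.Perm.sign w : ℤ) : F) • P w) *ᵥ Pi.single u 1 = 0 := by
    intro m
    induction m using Nat.strong_induction_on with
    | _ m ih =>
      intro u hm
      by_cases hEq : ∃ i, ∃ h : i + 1 < n, k ≤ i ∧ i ≤ k + N ∧
          u ⟨i, Nat.lt_of_succ_lt h⟩ = u ⟨i+1, h⟩
      · obtain ⟨i, h, h1, h2, hu⟩ := hEq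
        have hMu : bowlM F q n N i *ᵥ Pi.single u 1 = Pi.single u 1 := by
          rw [AltWin.bowlM_col_le h hu.le, AltWin.swapTup_self h hu]
        rw [hvec]
        apply Finset.sum_involution (fun w _ => w * adjSwap n i)
        · intro w hw
          have hPvec : ∀ v : Equiv.Perm (Fin n), v ⟨i, Nat.lt_of_succ_lt h⟩ < v ⟨i+1, h⟩ →
              P (v * adjSwap n i) *ᵥ Pi.single u 1 = P v *ᵥ Pi.single u 1 := by
            intro v hasc
            rw [hPmul i h v hasc, ← Matrix.mulVec_mulVec, hMu]
          have hPeq : P (w * adjSwap n i) *ᵥ Pi.single u 1 = P w *ᵥ Pi.single u 1 := by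
            rcases hdich i h w with hasc | hasc
            · exact hPvec w hasc
            · have := hPvec _ hasc
              rw [hg_inv i w] at this
              exact this.symm
          rw [hPeq, sgn_mul i h w, neg_smul]
          exact add_neg_cancel _
        · intro w hw _; exact hne i h w
        · intro w hw; exact hclosed i h h1 h2 w hw
        · intro w hw; exact hg_inv i w
      · by_cases hDesc : ∃ i, ∃ h : i + 1 < n, k ≤ i ∧ i ≤ k + N ∧
            u ⟨i+1, h⟩ < u ⟨i, Nat.lt_of_succ_lt h⟩
        · obtain ⟨i, h, h1, h2, hd⟩ := hDesc
          set u' := swapTup n N i u with hu'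
          have hle : u' ⟨i, Nat.lt_of_succ_lt h⟩ < u' ⟨i+1, h⟩ := by
            rw [hu', AltWin.swapTup_fst h, AltWin.swapTup_snd h]; exact hd
          have hcol : bowlM F q n N i *ᵥ Pi.single u' 1 = Pi.single u 1 := by
            rw [AltWin.bowlM_col_le h hle.le, hu', AltWin.swapTup_swapTup h]
          have htup : AltWin.tupInv u = AltWin.tupInv u' + 1 := by
            have hcomp : (u' ∘ Equiv.swap (⟨i, Nat.lt_of_succ_lt h⟩ : Fin n) ⟨i+1, h⟩) = u := by
              rw [hu', swapTup, dif_pos h]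
              funext x
              simp [Equiv.swap_apply_self]
            have := AltWin.tupInv_comp_swap h hle
            rwa [hcomp] at this
          have hlt : AltWin.tupInv u' < m := by omega
          rw [← hcol, Matrix.mulVec_mulVec, hA i h h1 h2, Matrix.smul_mulVec,
            ih _ hlt u' rfl, smul_zero]
        · exfalso
          push_neg at hEq hDesc
          have hstep : ∀ i (h : i + 1 < n), k ≤ i → i ≤ k + N →
              u ⟨i, Nat.lt_of_succ_lt h⟩ < u ⟨i+1, h⟩ := by
            intro i h h1 h2
            rcases lt_trichotomy (u ⟨i, Nat.lt_of_succ_lt h⟩) (u ⟨i+1, h⟩) with h' | h' | h'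
            · exact h'
            · exact absurd h' (hEq i h h1 h2)
            · exact absurd h' (not_lt_of_ge (hDesc i h h1 h2))
          have pig : ∀ j, j ≤ N + 1 → ∀ hj : k + j < n, j ≤ (u ⟨k + j, hj⟩ : ℕ) := by
            intro j
            induction j with
            | zero => intro _ _; exact Nat.zero_le _
            | succ j ihj =>
              intro hjN hj
              have hj' : k + j < n := by omega
              have e1 := ihj (by omega) hj'
              have e2 := hstep (k + j) (by omega : (k + j) + 1 < n) (by omega) (by omega)
              have e3 : (u ⟨k + j, hj'⟩ : ℕ) < (u ⟨k + (j + 1), hj⟩ : ℕ) := e2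
              omega
          have hfin := pig (N + 1) le_rfl (by omega)
          have hb := (u ⟨k + (N + 1), by omega⟩).is_lt
          omega
  exact AltWin.matrix_ext_col fun u => by rw [key _ u rfl, Matrix.zero_mulVec]
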